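/- arXiv:1705.01744 — 2 statements merged into one kernel-verified Lean document; each statement's English description precedes it below -/
import Mathlib

section
/- For every cycle C_n with n ≥ 3, the incidence graph I_{C_n} is isomorphic to the square of the cycle C_{2n}. -/
open SimpleGraph

variable {V : Type*}

/-- An incidence of a graph `G`: a pair `(v, e)` where `e` is an edge of `G` and `v ∈ e`. -/
def Inc (G : SimpleGraph V) : Type _ :=
  {p : V × Sym2 V // p.2 ∈ G.edgeSet ∧ p.1 ∈ p.2}

/-- The incidence graph `I_G` of `G`: vertices are incidences of `G`, with `(v,e)` and `(w,f)`
adjacent whenever they are distinct and `v = w`, or `e = f`, or the pair `vw` equals `e` or `f`. -/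
def incGraph (G : SimpleGraph V) : SimpleGraph (Inc G) where
  Adj a b := a ≠ b ∧ (a.1.1 = b.1.1 ∨ a.1.2 = b.1.2 ∨
      s(a.1.1, b.1.1) = a.1.2 ∨ s(a.1.1, b.1.1) = b.1.2)
  symm := by
    constructor
    rintro a b ⟨hab, h⟩
    refine ⟨hab.symm, ?_⟩
    rw [Sym2.eq_swap (a := b.1.1) (b := a.1.1)]
    rcases h with h | h | h | h
    · exact Or.inl h.symm
    · exact Or.inr (Or.inl h.symm)
    · exact Or.inr (Or.inr (Or.inr h))
    · exact Or.inr (Or.inr (Or.inl h))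
  loopless := ⟨fun _ h => h.1 rfl⟩

/-- `G` admits an incidence `p`-colouring. -/
def IncColorable (G : SimpleGraph V) (p : ℕ) : Prop :=
  (incGraph G).Colorable p

/-- `G` is incidence `k`-choosable. -/
def IncChoosable (G : SimpleGraph V) (k : ℕ) : Prop :=
  ∀ L : Inc G → Finset ℕ, (∀ i, (L i).card = k) →
    ∃ c : Inc G → ℕ, (∀ i, c i ∈ L i) ∧ ∀ i j, (incGraph G).Adj i j → c i ≠ c j

/-- The incidence chromatic number `χᵢ(G)`. -/
noncomputable def incChromaticNumber (G : SimpleGraph V) : ℕ :=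
  sInf {p | IncColorable G p}

/-- The incidence choice number `chᵢ(G)`. -/
noncomputable def incChoiceNumber (G : SimpleGraph V) : ℕ :=
  sInf {k | IncChoosable G k}

/-- The maximum degree `Δ(G)` of a finite graph. -/
noncomputable def maxDeg [Fintype V] (G : SimpleGraph V) : ℕ :=
  Finset.univ.sup fun v => (G.neighborSet v).ncard

/-- The square `H²` of a graph: vertices at distance 1 or 2 are adjacent. -/
def gsquare {W : Type*} (H : SimpleGraph W) : SimpleGraph W where
  Adj a b := a ≠ b ∧ H.Reachable a b ∧ H.dist a b ≤ 2
  symm := by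
    constructor
    rintro a b ⟨h1, h2, h3⟩
    exact ⟨h1.symm, h2.symm, by rwa [SimpleGraph.dist_comm]⟩
  loopless := ⟨fun _ h => h.1 rfl⟩


-- ======================= auxiliary lemmas =======================

lemma fin_sub_val {N : ℕ} (a b : Fin N) :
    (a - b).val = if b.val ≤ a.val then a.val - b.val else a.val + N - b.val := by
  have ha := a.isLt; have hb := b.isLt
  rw [Fin.sub_def]
  simp only
  split
  · next h =>
    have h2 : N - b.val + a.val = (a.val - b.val) + N := by omega
    rw [h2, Nat.add_mod_right, Nat.mod_eq_of_lt (by omega)]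
  · next h =>
    rw [Nat.mod_eq_of_lt (by omega)]
    omega

lemma fin_val_one' {N : ℕ} [NeZero N] (hN : 2 ≤ N) : ((1 : Fin N)).val = 1 := by
  rw [Fin.val_one', Nat.mod_eq_of_lt (by omega)]

lemma sq_half {N : ℕ} (hN : 5 ≤ N) {a b : Fin N} (hne : a ≠ b)
    (h : (a - b).val = 1 ∨ (a - b).val = 2) : (gsquare (cycleGraph N)).Adj a b := by
  haveI : NeZero N := ⟨by omega⟩
  have ha := a.isLt; have hb := b.isLt
  have h1N := fin_val_one' (N := N) (by omega)
  rw [fin_sub_val] at h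
  rcases h with h | h
  · have hadj : (cycleGraph N).Adj a b := by
      rw [cycleGraph_adj']
      left
      rw [fin_sub_val]
      split at h <;> split <;> omega
    refine ⟨hne, ⟨hadj.toWalk⟩, le_trans (SimpleGraph.dist_le hadj.toWalk) (by simp)⟩
  · set c : Fin N := ⟨if a.val = 0 then N - 1 else a.val - 1, by split <;> omega⟩ with hc
    have hcv : c.val = if a.val = 0 then N - 1 else a.val - 1 := rfl
    have hadj1 : (cycleGraph N).Adj a c := by
      rw [cycleGraph_adj']
      left
      rw [fin_sub_val, hcv]
      split at h <;> split_ifs <;> omega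
    have hadj2 : (cycleGraph N).Adj c b := by
      rw [cycleGraph_adj']
      left
      rw [fin_sub_val, hcv]
      split at h <;> split_ifs <;> omega
    refine ⟨hne, ⟨Walk.cons hadj1 hadj2.toWalk⟩,
      le_trans (SimpleGraph.dist_le (Walk.cons hadj1 hadj2.toWalk)) (by simp)⟩

lemma step2 {N : ℕ} (hN : 5 ≤ N) {a c b : Fin N} (h1 : (cycleGraph N).Adj a c)
    (h2 : (cycleGraph N).Adj c b) (hne : a ≠ b) : (a - b).val = 2 ∨ (b - a).val = 2 := by
  have ha := a.isLt; have hb := b.isLt; have hcc := c.isLt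
  have hne' : a.val ≠ b.val := fun h => hne (Fin.ext h)
  rw [cycleGraph_adj', fin_sub_val, fin_sub_val] at h1 h2
  rw [fin_sub_val, fin_sub_val]
  split_ifs at h1 h2 ⊢ <;> omega

lemma sq_cycle_adj {N : ℕ} (hN : 5 ≤ N) (a b : Fin N) :
    (gsquare (cycleGraph N)).Adj a b ↔ a ≠ b ∧
      ((a - b).val = 1 ∨ (b - a).val = 1 ∨ (a - b).val = 2 ∨ (b - a).val = 2) := by
  constructor
  · rintro ⟨hne, hreach, hdist⟩
    refine ⟨hne, ?_⟩
    haveI : Nonempty (Fin N) := ⟨a⟩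
    have hconn : (cycleGraph N).Connected := ⟨cycleGraph_preconnected⟩
    obtain ⟨p, hp⟩ := hconn.exists_walk_length_eq_dist a b
    rw [← hp] at hdist
    cases p with
    | nil => exact absurd rfl hne
    | cons h1 q =>
      cases q with
      | nil =>
        rw [cycleGraph_adj'] at h1
        tauto
      | cons h2 q2 =>
        cases q2 with
        | nil =>
          have := step2 hN h1 h2 hne
          tauto
        | cons h3 q3 => simp [Walk.length_cons] at hdist
  · rintro ⟨hne, h | h | h | h⟩
    · exact sq_half hN hne (Or.inl h)
    · exact (sq_half hN hne.symm (Or.inl h)).symm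
    · exact sq_half hN hne (Or.inr h)
    · exact (sq_half hN hne.symm (Or.inr h)).symm

lemma sq_val {N : ℕ} (hN : 5 ≤ N) (a b : Fin N) :
    (gsquare (cycleGraph N)).Adj a b ↔ a.val ≠ b.val ∧
      (b.val + 1 = a.val ∨ a.val + 1 = b.val ∨ b.val + 2 = a.val ∨ a.val + 2 = b.val ∨
       a.val + N = b.val + 1 ∨ b.val + N = a.val + 1 ∨
       a.val + N = b.val + 2 ∨ b.val + N = a.val + 2) := by
  have ha := a.isLt; have hb := b.isLt
  rw [sq_cycle_adj hN, ne_eq, Fin.ext_iff, fin_sub_val, fin_sub_val]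
  constructor
  · rintro ⟨hne, h⟩
    refine ⟨hne, ?_⟩
    split_ifs at h <;> omega
  · rintro ⟨hne, h⟩
    refine ⟨hne, ?_⟩
    split_ifs <;> omega

/-- the `q`-th edge of the cycle -/
def ce (m : ℕ) (q : Fin (m + 3)) : Sym2 (Fin (m + 3)) := s(q, q + 1)

lemma fin_add_one_val {m : ℕ} (x : Fin (m + 3)) :
    (x + 1).val = if x.val + 1 = m + 3 then 0 else x.val + 1 := by
  have hx := x.isLt
  rw [Fin.val_add, fin_val_one' (by omega)]
  split
  · next h => rw [h, Nat.mod_self]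
  · next h => rw [Nat.mod_eq_of_lt (by omega)]

lemma ce_mem_edgeSet (m : ℕ) (q : Fin (m + 3)) : ce m q ∈ (cycleGraph (m + 3)).edgeSet := by
  rw [ce, SimpleGraph.mem_edgeSet, cycleGraph_adj']
  right
  rw [add_sub_cancel_left, fin_val_one' (by omega)]

lemma ce_inj_iff {m : ℕ} {a b : Fin (m + 3)} : ce m a = ce m b ↔ a = b := by
  constructor
  · intro h
    rw [ce, ce, Sym2.eq_iff] at h
    rcases h with ⟨h1, _⟩ | ⟨h1, h2⟩
    · exact h1
    · exfalso
      rw [Fin.ext_iff, fin_add_one_val] at h1 h2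
      have := a.isLt; have := b.isLt
      split_ifs at h1 h2 <;> omega
  · exact fun h => by rw [h]

lemma sym2_eq_ce {m : ℕ} (a b q : Fin (m + 3)) :
    s(a, b) = ce m q ↔ (a = q ∧ b = q + 1) ∨ (a = q + 1 ∧ b = q) := by
  rw [ce]; exact Sym2.eq_iff


lemma eq_add_one_of_sub {m : ℕ} {x y : Fin (m + 3)} (h : (y - x).val = 1) : y = x + 1 := by
  apply Fin.ext
  rw [fin_add_one_val]
  rw [fin_sub_val] at h
  have := x.isLt; have := y.isLt
  split_ifs at h ⊢ <;> omega

lemma eq_sub_one_of_sub {m : ℕ} {x y : Fin (m + 3)} (h : (y - x).val = 1) : x = y - 1 := by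
  apply Fin.ext
  haveI : NeZero (m + 3) := ⟨by omega⟩
  rw [fin_sub_val, fin_val_one' (by omega)]
  rw [fin_sub_val] at h
  have := x.isLt; have := y.isLt
  split_ifs at h ⊢ <;> omega

lemma inc_edge_cases {m : ℕ} {e : Sym2 (Fin (m + 3))} {v : Fin (m + 3)}
    (he : e ∈ (cycleGraph (m + 3)).edgeSet) (hv : v ∈ e) :
    e = ce m v ∨ e = ce m (v - 1) := by
  induction e using Sym2.ind with
  | _ x y =>
    rw [SimpleGraph.mem_edgeSet, cycleGraph_adj'] at he
    rw [Sym2.mem_iff] at hv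
    rcases hv with rfl | rfl
    · rcases he with h | h
      · right
        have hy : y = v - 1 := eq_sub_one_of_sub h
        subst hy
        rw [ce, sub_add_cancel]
        exact Sym2.eq_swap
      · left
        have hy : y = v + 1 := eq_add_one_of_sub h
        subst hy
        rfl
    · rcases he with h | h
      · left
        have hx : x = v + 1 := eq_add_one_of_sub h
        subst hx
        rw [ce]
        exact Sym2.eq_swap
      · right
        have hx : x = v - 1 := eq_sub_one_of_sub h
        subst hx
        rw [ce, sub_add_cancel]

/-- the vertex-edge incidence of the cycle indexed by `i : Fin (2(m+3))` -/
def cyc_g (m : ℕ) (i : Fin (2 * (m + 3))) :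
    {p : Fin (m + 3) × Sym2 (Fin (m + 3)) // p.2 ∈ (cycleGraph (m + 3)).edgeSet ∧ p.1 ∈ p.2} :=
  if h : i.val % 2 = 0 then
    ⟨(⟨i.val / 2, by have := i.isLt; omega⟩, ce m ⟨i.val / 2, by have := i.isLt; omega⟩),
      ce_mem_edgeSet m _, by rw [ce]; exact Sym2.mem_mk_left _ _⟩
  else
    ⟨((⟨i.val / 2, by have := i.isLt; omega⟩ : Fin (m + 3)) + 1,
        ce m ⟨i.val / 2, by have := i.isLt; omega⟩),
      ce_mem_edgeSet m _, by rw [ce]; exact Sym2.mem_mk_right _ _⟩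

lemma incGraph_adj {G : SimpleGraph V} (a b : Inc G) :
    (incGraph G).Adj a b ↔ a ≠ b ∧ (a.1.1 = b.1.1 ∨ a.1.2 = b.1.2 ∨
      s(a.1.1, b.1.1) = a.1.2 ∨ s(a.1.1, b.1.1) = b.1.2) := Iff.rfl

lemma cyc_g_fst_snd (m : ℕ) (i : Fin (2 * (m + 3))) :
    (cyc_g m i).1.2 = ce m ⟨i.val / 2, by have := i.isLt; omega⟩ ∧
    (cyc_g m i).1.1.val = (if i.val % 2 = 0 then i.val / 2 else
      (if i.val / 2 + 1 = m + 3 then 0 else i.val / 2 + 1)) := by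
  by_cases h : i.val % 2 = 0
  · rw [cyc_g, dif_pos h]
    exact ⟨rfl, by rw [if_pos h]⟩
  · rw [cyc_g, dif_neg h]
    exact ⟨rfl, by rw [if_neg h]; exact fin_add_one_val _⟩

lemma cyc_g_inj (m : ℕ) : Function.Injective (cyc_g m) := by
  intro i j hij
  have hi := i.isLt; have hj := j.isLt
  obtain ⟨he_i, hv_i⟩ := cyc_g_fst_snd m i
  obtain ⟨he_j, hv_j⟩ := cyc_g_fst_snd m j
  have h1 : (cyc_g m i).1.1.val = (cyc_g m j).1.1.val := by rw [hij]
  have h2 : (cyc_g m i).1.2 = (cyc_g m j).1.2 := by rw [hij]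
  rw [hv_i, hv_j] at h1
  rw [he_i, he_j, ce_inj_iff, Fin.ext_iff] at h2
  simp only at h2
  apply Fin.ext
  split_ifs at h1 <;> omega

lemma cyc_g_surj (m : ℕ) : Function.Surjective (cyc_g m) := by
  rintro ⟨⟨v, e⟩, he, hv⟩
  have hvlt := v.isLt
  rcases inc_edge_cases he hv with h | h
  · refine ⟨⟨2 * v.val, by omega⟩, ?_⟩
    have h' : e = ce m v := h
    have hq : ((⟨(2 * v.val) / 2, by omega⟩ : Fin (m + 3))) = v :=
      Fin.ext (by show 2 * v.val / 2 = v.val; omega)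
    rw [cyc_g, dif_pos (by show 2 * v.val % 2 = 0; omega)]
    apply Subtype.ext
    simp only
    rw [hq, h']
  · refine ⟨⟨2 * (v - 1).val + 1, by have := (v - 1).isLt; omega⟩, ?_⟩
    have h' : e = ce m (v - 1) := h
    have hq : ((⟨(2 * (v - 1).val + 1) / 2, by have := (v - 1).isLt; omega⟩ : Fin (m + 3)))
        = v - 1 := Fin.ext (by show (2 * (v - 1).val + 1) / 2 = (v - 1).val; omega)
    rw [cyc_g, dif_neg (by show ¬((2 * (v - 1).val + 1) % 2 = 0); omega)]
    apply Subtype.ext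
    simp only
    rw [hq, sub_add_cancel, h']

set_option maxHeartbeats 2000000 in
lemma cyc_g_adj (m : ℕ) (i j : Fin (2 * (m + 3))) :
    (incGraph (cycleGraph (m + 3))).Adj (cyc_g m i) (cyc_g m j) ↔
      (gsquare (cycleGraph (2 * (m + 3)))).Adj i j := by
  have hi := i.isLt; have hj := j.isLt
  obtain ⟨he_i, hv_i⟩ := cyc_g_fst_snd m i
  obtain ⟨he_j, hv_j⟩ := cyc_g_fst_snd m j
  refine (incGraph_adj (G := cycleGraph (m + 3)) (cyc_g m i) (cyc_g m j)).trans ?_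
  change (cyc_g m i ≠ cyc_g m j) ∧ _ ↔ _
  rw [sq_val (by omega), (cyc_g_inj m).ne_iff, he_i, he_j, ce_inj_iff,
    sym2_eq_ce, sym2_eq_ce]
  simp only [ne_eq, Fin.ext_iff, fin_add_one_val, hv_i, hv_j]
  split_ifs <;>
    first
    | omega
    | (simp only [false_and, and_false, false_or, or_false, true_and, and_true, or_true, true_or,
        Nat.succ_ne_zero, Nat.left_eq_add]
       omega)

-- ======================= end auxiliary lemmas =======================

theorem stmt7 (n : ℕ) (hn : 3 ≤ n) :
    Nonempty (incGraph (cycleGraph n) ≃g gsquare (cycleGraph (2 * n))) := by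
  obtain ⟨m, rfl⟩ : ∃ m, n = m + 3 := ⟨n - 3, by omega⟩
  have hbij : Function.Bijective (cyc_g m) := ⟨cyc_g_inj m, cyc_g_surj m⟩
  exact ⟨(RelIso.mk (Equiv.ofBijective _ hbij) (cyc_g_adj m _ _)).symm⟩
end

section
/- Let T be a tree, k ≥ 1 an integer, and L a list assignment with |L(v,vu)| ≥ Δ(T) + k for every incidence (v,vu) of T. Then for every set of k incidences (x_1,x_1y_1),…,(x_k,x_ky_k) of T and colours α_1,…,α_k with α_i ∈ L(x_i,x_iy_i) for all i and α_i ≠ α_j whenever (x_i,x_iy_i) and (x_j,x_jy_j) are adjacent, there exists an L-list incidence colouring σ of T with σ(x_i,x_iy_i) = α_i for all i. -/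
open SimpleGraph

variable {V : Type*}

namespace IncAux

variable {G : SimpleGraph V}

noncomputable def oth (a : Inc G) : V := Sym2.Mem.other a.2.2

lemma oth_spec (a : Inc G) : s(a.1.1, oth a) = a.1.2 := Sym2.other_spec _

lemma adj_oth (a : Inc G) : G.Adj a.1.1 (oth a) := by
  have h := a.2.1
  rw [← oth_spec a, SimpleGraph.mem_edgeSet] at h
  exact h

lemma inc_ext {a b : Inc G} (h1 : a.1.1 = b.1.1) (h2 : a.1.2 = b.1.2) : a = b :=
  Subtype.ext (Prod.ext h1 h2)

lemma oth_eq {a : Inc G} {x y : V} (h1 : a.1.1 = x) (h2 : a.1.2 = s(x, y)) : oth a = y := by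
  have h := oth_spec a
  rw [h1, h2] at h
  exact Sym2.congr_right.mp h

variable [DecidableEq V] {T : SimpleGraph V} {r : V}

lemma exists_shortest (hc : T.Connected) (v : V) :
    ∃ p : T.Walk r v, p.IsPath ∧ p.length = T.dist r v := by
  obtain ⟨w, hw⟩ := hc.exists_walk_length_eq_dist r v
  refine ⟨w.bypass, w.bypass_isPath, le_antisymm ?_ ?_⟩
  · exact hw ▸ w.length_bypass_le
  · exact SimpleGraph.dist_le _

lemma support_dist {v x : V} (p : T.Walk r v) (hp : p.length = T.dist r v)
    (hx : x ∈ p.support) : T.dist r x + T.dist x v ≤ T.dist r v := by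
  have h := congrArg SimpleGraph.Walk.length (p.take_spec hx)
  rw [SimpleGraph.Walk.length_append] at h
  calc T.dist r x + T.dist x v ≤ (p.takeUntil x hx).length + (p.dropUntil x hx).length :=
        Nat.add_le_add (SimpleGraph.dist_le _) (SimpleGraph.dist_le _)
    _ = p.length := h
    _ = T.dist r v := hp

omit [DecidableEq V] in
lemma concat_path {v w : V} {p : T.Walk r v} (hp : p.IsPath) (h : T.Adj v w)
    (hw : w ∉ p.support) : (p.concat h).IsPath := by
  rw [← SimpleGraph.Walk.isPath_reverse_iff, SimpleGraph.Walk.reverse_concat]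
  refine SimpleGraph.Walk.IsPath.cons hp.reverse ?_
  rw [SimpleGraph.Walk.support_reverse, List.mem_reverse]
  exact hw

lemma adj_dist_ne (hT : T.IsTree) {v w : V} (h : T.Adj v w) : T.dist r v ≠ T.dist r w := by
  intro he
  obtain ⟨p, hp, hl⟩ := exists_shortest (r := r) hT.isConnected v
  have hw : w ∉ p.support := by
    intro hw
    have h2 := support_dist p hl hw
    rw [← he] at h2
    have h3 : T.dist w v = 0 := by omega
    have := (hT.isConnected.dist_eq_zero_iff (u := w) (v := v)).mp h3
    exact h.ne' this
  obtain ⟨q, hq, hlq⟩ := exists_shortest (r := r) hT.isConnected w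
  have huniq := (hT.existsUnique_path r w).unique (concat_path hp h hw) hq
  have := congrArg SimpleGraph.Walk.length huniq
  rw [SimpleGraph.Walk.length_concat, hl, hlq, ← he] at this
  omega

lemma parent_unique (hT : T.IsTree) {v u u' : V} (hu : T.Adj v u) (hu' : T.Adj v u')
    (h1 : T.dist r u < T.dist r v) (h2 : T.dist r u' < T.dist r v) : u = u' := by
  have build : ∀ (z : V) (hz : T.Adj v z), T.dist r z < T.dist r v →
      ∃ (p : T.Walk r z) (t : List V), (p.concat hz.symm).IsPath ∧
        (p.concat hz.symm).reverse.support = v :: z :: t := by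
    intro z hz hzlt
    obtain ⟨p, hp, hl⟩ := exists_shortest (r := r) hT.isConnected z
    have hv : v ∉ p.support := by
      intro hv
      have h2 := support_dist p hl hv
      have h3 : T.dist r v ≤ T.dist r v + T.dist v z := Nat.le_add_right _ _
      omega
    refine ⟨p, p.reverse.support.tail, concat_path hp hz.symm hv, ?_⟩
    rw [SimpleGraph.Walk.reverse_concat, SimpleGraph.Walk.support_cons,
      p.reverse.support_eq_cons]
    rfl
  obtain ⟨p, t1, hp, hsp⟩ := build u hu h1
  obtain ⟨q, t2, hq, hsq⟩ := build u' hu' h2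
  have huniq := (hT.existsUnique_path r v).unique hp hq
  have h5 := congrArg (fun w : T.Walk r v => w.reverse.support) huniq
  simp only [hsp, hsq, List.cons.injEq] at h5
  exact h5.2.1

omit [DecidableEq V] in
lemma exists_parent (hT : T.IsTree) {v : V} (hv : v ≠ r) :
    ∃ u, T.Adj v u ∧ T.dist r u + 1 = T.dist r v := by
  classical
  obtain ⟨p, hp, hl⟩ := exists_shortest (r := r) hT.isConnected v
  obtain ⟨u, h, q, hq⟩ := SimpleGraph.Walk.exists_eq_cons_of_ne hv p.reverse
  refine ⟨u, h, ?_⟩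
  have hlen : q.length + 1 = T.dist r v := by
    have := congrArg SimpleGraph.Walk.length hq
    rw [SimpleGraph.Walk.length_reverse, SimpleGraph.Walk.length_cons] at this
    omega
  have hd1 : T.dist r u ≤ q.length := by
    have := SimpleGraph.dist_le q.reverse
    rwa [SimpleGraph.Walk.length_reverse] at this
  have hd2 : T.dist r v ≤ T.dist r u + T.dist u v :=
    hT.isConnected.dist_triangle
  have hd3 : T.dist u v ≤ 1 := by
    have := SimpleGraph.dist_le (SimpleGraph.Walk.cons h.symm SimpleGraph.Walk.nil)
    simpa using this
  omega

lemma adj_cases {G : SimpleGraph V} {a b : Inc G} (h : (incGraph G).Adj a b) :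
    b.1.1 = a.1.1 ∨ b.1.1 = oth a ∨ (G.Adj a.1.1 b.1.1 ∧ oth b = a.1.1) := by
  obtain ⟨hne, hcase⟩ := h
  rcases hcase with h1 | h1 | h1 | h1
  · exact Or.inl h1.symm
  · have hb := b.2.2
    rw [← h1, ← oth_spec a, Sym2.mem_iff] at hb
    rcases hb with hb | hb
    · exact Or.inl hb
    · exact Or.inr (Or.inl hb)
  · rw [← oth_spec a] at h1
    exact Or.inr (Or.inl (Sym2.congr_right.mp h1))
  · have hadj : G.Adj a.1.1 b.1.1 := by
      have h2 := b.2.1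
      rw [← h1, SimpleGraph.mem_edgeSet] at h2
      exact h2
    have hoth : oth b = a.1.1 := oth_eq rfl (by rw [← h1, Sym2.eq_swap])
    exact Or.inr (Or.inr ⟨hadj, hoth⟩)

end IncAux

theorem stmt13 [Fintype V] (T : SimpleGraph V) (hT : T.IsTree) (k : ℕ) (hk : 1 ≤ k)
    (L : Inc T → Finset ℕ) (hL : ∀ i, maxDeg T + k ≤ (L i).card)
    (I : Fin k → Inc T) (hinj : Function.Injective I)
    (α : Fin k → ℕ) (hmem : ∀ i, α i ∈ L (I i))
    (hdist : ∀ i j, (incGraph T).Adj (I i) (I j) → α i ≠ α j) :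
    ∃ σ : Inc T → ℕ, (∀ a, σ a ∈ L a) ∧
      (∀ a b, (incGraph T).Adj a b → σ a ≠ σ b) ∧ ∀ i, σ (I i) = α i := by
  classical
  haveI : Fintype (Inc T) := Subtype.fintype _
  set c1 : Inc T := I ⟨0, hk⟩ with hc1
  set r : V := c1.1.1 with hrdef
  set d : V → ℕ := fun v => T.dist r v with hddef
  set N : ℕ := Fintype.card (Inc T) with hN
  set eqv := Fintype.equivFin (Inc T) with heqv
  set rk : Inc T → ℕ :=
    fun a => 2 * d a.1.1 + if d a.1.1 < d (IncAux.oth a) then 1 else 0 with hrk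
  set key : Inc T → ℕ := fun a => rk a * (N + 1) + (eqv a : ℕ) with hkeydef
  have hkeymono : ∀ a b : Inc T, rk a < rk b → key a < key b := by
    intro a b h
    have h1 : (eqv a : ℕ) < N + 1 := Nat.lt_succ_of_lt (Nat.lt_of_lt_of_le (eqv a).2 le_rfl)
    calc rk a * (N + 1) + (eqv a : ℕ) < rk a * (N + 1) + (N + 1) := by omega
      _ = (rk a + 1) * (N + 1) := by ring
      _ ≤ rk b * (N + 1) := Nat.mul_le_mul_right _ h
      _ ≤ key b := Nat.le_add_right _ _
  have hkeyinj : ∀ a b : Inc T, key a = key b → a = b := by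
    intro a b h
    have hrkeq : rk a = rk b := by
      rcases lt_trichotomy (rk a) (rk b) with hlt | he | hlt
      · exact absurd h (Nat.ne_of_lt (hkeymono a b hlt))
      · exact he
      · exact absurd h.symm (Nat.ne_of_lt (hkeymono b a hlt))
    have : (eqv a : ℕ) = (eqv b : ℕ) := by
      simp only [hkeydef, hrkeq] at h; omega
    exact eqv.injective (Fin.ext this)
  have hkeyle : ∀ a b : Inc T, key a < key b → rk a ≤ rk b := by
    intro a b h
    by_contra hc
    exact absurd (hkeymono b a (Nat.lt_of_not_le hc)) (Nat.not_lt_of_lt h)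
  set P : Finset (Inc T) := Finset.univ.image I with hPdef
  have hPcard : P.card = k := by
    rw [hPdef, Finset.card_image_of_injective _ hinj, Finset.card_univ, Fintype.card_fin]
  have hc1P : c1 ∈ P := Finset.mem_image_of_mem I (Finset.mem_univ _)
  have hmemP : ∀ b ∈ P, ∃ i, I i = b := by
    intro b hb
    obtain ⟨i, _, hi⟩ := Finset.mem_image.mp hb
    exact ⟨i, hi⟩
  have count : ∀ a : Inc T, a ∉ P →
      (Finset.univ.filter fun b => (incGraph T).Adj a b ∧ (b ∈ P ∨ key b < key a)).card + 1
        ≤ maxDeg T + k := by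
    have hdr : d r = 0 := by simp [hddef]
    have hadjd : ∀ {x y : V}, T.Adj x y → d y + 1 = d x ∨ d x + 1 = d y := by
      intro x y hxy
      have hne : T.dist r x ≠ T.dist r y := IncAux.adj_dist_ne (r := r) hT hxy
      have t1 : T.dist r x ≤ T.dist r y + T.dist y x := hT.isConnected.dist_triangle
      have t2 : T.dist r y ≤ T.dist r x + T.dist x y := hT.isConnected.dist_triangle
      have e1 : T.dist y x ≤ 1 := by
        have := SimpleGraph.dist_le (SimpleGraph.Walk.cons hxy.symm SimpleGraph.Walk.nil)
        simpa using this
      have e2 : T.dist x y ≤ 1 := by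
        have := SimpleGraph.dist_le (SimpleGraph.Walk.cons hxy SimpleGraph.Walk.nil)
        simpa using this
      simp only [hddef]
      omega
    have hpu : ∀ {x y y' : V}, T.Adj x y → T.Adj x y' → d y < d x → d y' < d x → y = y' := by
      intro x y y' h1 h2 h3 h4
      exact IncAux.parent_unique hT h1 h2 h3 h4
    have cardAt : ∀ w : V, (Finset.univ.filter fun b : Inc T => b.1.1 = w).card ≤ maxDeg T := by
      intro w
      have h1 : (Finset.univ.filter fun b : Inc T => b.1.1 = w).card
          ≤ (T.neighborFinset w).card := by
        apply Finset.card_le_card_of_injOn (fun b => IncAux.oth b)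
        · intro b hb
          replace hb := Finset.mem_filter.mp (Finset.mem_coe.mp hb)
          rw [Finset.mem_coe, SimpleGraph.mem_neighborFinset, ← hb.2]
          exact IncAux.adj_oth b
        · intro b hb b' hb' he
          change IncAux.oth b = IncAux.oth b' at he
          rw [Finset.mem_coe, Finset.mem_filter] at hb hb'
          refine IncAux.inc_ext (hb.2.trans hb'.2.symm) ?_
          rw [← IncAux.oth_spec b, ← IncAux.oth_spec b', hb.2, hb'.2, he]
      have h2 : (T.neighborFinset w).card = (T.neighborSet w).ncard := by
        rw [SimpleGraph.neighborFinset_def, ← Set.ncard_eq_toFinset_card']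
      have h3 : (T.neighborSet w).ncard ≤ maxDeg T :=
        Finset.le_sup (f := fun v => (T.neighborSet v).ncard) (Finset.mem_univ w)
      omega
    intro a haP
    have hanec1 : a ≠ c1 := fun h => haP (h ▸ hc1P)
    obtain ⟨hadj, hdcase⟩ : T.Adj a.1.1 (IncAux.oth a) ∧
        (d (IncAux.oth a) + 1 = d a.1.1 ∨ d a.1.1 + 1 = d (IncAux.oth a)) :=
      ⟨IncAux.adj_oth a, hadjd (IncAux.adj_oth a)⟩
    rcases hdcase with hdown | hup
    · -- a is a "down" incidence; all early neighbours live at the parent u = oth a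
      have hrka : rk a = 2 * d a.1.1 := by
        simp only [hrk, if_neg (by omega : ¬ d a.1.1 < d (IncAux.oth a)), add_zero]
      have hclass : ∀ b : Inc T, (incGraph T).Adj a b → (b = c1 ∨ key b < key a) →
          b.1.1 = IncAux.oth a := by
        intro b hab hbc
        have hbne : b ≠ a := by
          rcases hbc with h | h
          · exact fun he => hanec1 (he.symm.trans h)
          · exact fun he => absurd (he ▸ h) (lt_irrefl _)
        have hdvpos : 0 < d a.1.1 := by omega
        rcases IncAux.adj_cases hab with h1 | h1 | ⟨h1, h2⟩
        · -- b at the same vertex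
          exfalso
          have hbadj : T.Adj a.1.1 (IncAux.oth b) := by
            have := IncAux.adj_oth b; rwa [h1] at this
          rcases hadjd hbadj with hc | hc
          · have : IncAux.oth b = IncAux.oth a := hpu hbadj hadj (by omega) (by omega)
            exact hbne (IncAux.inc_ext h1
              (by rw [← IncAux.oth_spec b, ← IncAux.oth_spec a, h1, this]))
          · have hrkb : rk b = 2 * d a.1.1 + 1 := by
              simp only [hrk, h1, if_pos (by omega : d a.1.1 < d (IncAux.oth b))]
            have hlt : key a < key b := hkeymono a b (by omega)
            rcases hbc with h | h
            · have hbr : b.1.1 = r := by rw [h, ← hrdef]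
              have hz : d a.1.1 = 0 := by rw [← h1, hbr]; exact hdr
              omega
            · omega
        · exact h1
        · -- b = (x, xv) with x a neighbour of v
          by_cases hxu : b.1.1 = IncAux.oth a
          · exact hxu
          · exfalso
            rcases hadjd h1 with hc | hc
            · exact hxu (hpu h1 hadj (by omega) (by omega))
            · have hrkb : rk b = 2 * d b.1.1 := by
                have hne : ¬ d b.1.1 < d (IncAux.oth b) := by rw [h2]; omega
                simp only [hrk, if_neg hne, add_zero]
              have hlt : key a < key b := hkeymono a b (by omega)
              rcases hbc with h | h
              · have hbr : b.1.1 = r := by rw [h, ← hrdef]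
                rw [hbr, hdr] at hc
                omega
              · omega
      have hsub : (Finset.univ.filter fun b =>
            (incGraph T).Adj a b ∧ (b ∈ P ∨ key b < key a)) ⊆
          (Finset.univ.filter fun b : Inc T => b.1.1 = IncAux.oth a) ∪ P.erase c1 := by
        intro b hb
        rw [Finset.mem_filter] at hb
        obtain ⟨-, hab, hor⟩ := hb
        rcases hor with hbP | hkey
        · by_cases hbc1 : b = c1
          · exact Finset.mem_union_left _ (Finset.mem_filter.mpr
              ⟨Finset.mem_univ _, hclass b hab (Or.inl hbc1)⟩)
          · exact Finset.mem_union_right _ (Finset.mem_erase.mpr ⟨hbc1, hbP⟩)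
        · exact Finset.mem_union_left _ (Finset.mem_filter.mpr
            ⟨Finset.mem_univ _, hclass b hab (Or.inr hkey)⟩)
      have h1 := Finset.card_le_card hsub
      have h2 := Finset.card_union_le
        (Finset.univ.filter fun b : Inc T => b.1.1 = IncAux.oth a) (P.erase c1)
      have h3 := cardAt (IncAux.oth a)
      have h4 : (P.erase c1).card = k - 1 := by rw [Finset.card_erase_of_mem hc1P, hPcard]
      omega
    · -- a is an "up" incidence
      have hrka : rk a = 2 * d a.1.1 + 1 := by
        simp only [hrk, if_pos (by omega : d a.1.1 < d (IncAux.oth a))]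
      by_cases hvr : a.1.1 = r
      · -- at the root
        have hsub : (Finset.univ.filter fun b =>
              (incGraph T).Adj a b ∧ (b ∈ P ∨ key b < key a)) ⊆
            ((Finset.univ.filter fun b : Inc T => b.1.1 = r).erase a) ∪ P := by
          intro b hb
          rw [Finset.mem_filter] at hb
          obtain ⟨-, hab, hor⟩ := hb
          rcases hor with hbP | hkey
          · exact Finset.mem_union_right _ hbP
          · refine Finset.mem_union_left _ (Finset.mem_erase.mpr
              ⟨fun he => absurd (he ▸ hkey) (lt_irrefl _), Finset.mem_filter.mpr
                ⟨Finset.mem_univ _, ?_⟩⟩)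
            have hdv0 : d a.1.1 = 0 := by rw [hvr, hdr]
            rcases IncAux.adj_cases hab with h1 | h1 | ⟨h1, h2⟩
            · rw [h1, hvr]
            · exfalso
              have hrkb : 2 * d b.1.1 ≤ rk b := by simp only [hrk]; omega
              have hd1 : d b.1.1 = d (IncAux.oth a) := by rw [h1]
              have : key a < key b := hkeymono a b (by omega)
              omega
            · exfalso
              rcases hadjd h1 with hc | hc
              · omega
              · have hrkb : rk b = 2 * d b.1.1 := by
                  have hne : ¬ d b.1.1 < d (IncAux.oth b) := by rw [h2]; omega
                  simp only [hrk, if_neg hne, add_zero]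
                have : key a < key b := hkeymono a b (by omega)
                omega
        have h1 := Finset.card_le_card hsub
        have h2 := Finset.card_union_le
          ((Finset.univ.filter fun b : Inc T => b.1.1 = r).erase a) P
        have h3 := cardAt r
        have hamem : a ∈ (Finset.univ.filter fun b : Inc T => b.1.1 = r) :=
          Finset.mem_filter.mpr ⟨Finset.mem_univ _, hvr⟩
        have h4 := Finset.card_erase_of_mem hamem
        have h5 : 1 ≤ (Finset.univ.filter fun b : Inc T => b.1.1 = r).card :=
          Finset.card_pos.mpr ⟨a, hamem⟩
        omega
      · -- not at the root: there is a parent pv of v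
        obtain ⟨pv, hpadj, hpd'⟩ := IncAux.exists_parent (r := r) hT hvr
        have hpd : d pv + 1 = d a.1.1 := hpd'
        have hpInc : s(pv, a.1.1) ∈ T.edgeSet ∧ pv ∈ s(pv, a.1.1) :=
          ⟨(T.mem_edgeSet).mpr hpadj.symm, Sym2.mem_mk_left _ _⟩
        set pInc : Inc T := ⟨(pv, s(pv, a.1.1)), hpInc⟩ with hpIncdef
        have hclass : ∀ b : Inc T, (incGraph T).Adj a b → (b = c1 ∨ key b < key a) →
            b ∈ ((Finset.univ.filter fun b : Inc T => b.1.1 = a.1.1).erase a) ∪ {pInc} := by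
          intro b hab hbc
          have hbne : b ≠ a := by
            rcases hbc with h | h
            · exact fun he => hanec1 (he.symm.trans h)
            · exact fun he => absurd (he ▸ h) (lt_irrefl _)
          rcases IncAux.adj_cases hab with h1 | h1 | ⟨h1, h2⟩
          · exact Finset.mem_union_left _ (Finset.mem_erase.mpr
              ⟨hbne, Finset.mem_filter.mpr ⟨Finset.mem_univ _, h1⟩⟩)
          · exfalso
            have hrkb : 2 * d b.1.1 ≤ rk b := by simp only [hrk]; omega
            have hd1 : d b.1.1 = d (IncAux.oth a) := by rw [h1]
            have hlt : key a < key b := hkeymono a b (by omega)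
            rcases hbc with h | h
            · have hbr : b.1.1 = r := by rw [h, ← hrdef]
              have hz : d (IncAux.oth a) = 0 := by rw [← hd1, hbr]; exact hdr
              omega
            · omega
          · rcases hadjd h1 with hc | hc
            · have hxpv : b.1.1 = pv := hpu h1 hpadj (by omega) (by omega)
              have : b = pInc := IncAux.inc_ext hxpv
                (by rw [← IncAux.oth_spec b, h2, hxpv, hpIncdef])
              exact Finset.mem_union_right _ (by rw [this]; exact Finset.mem_singleton_self _)
            · exfalso
              have hrkb : rk b = 2 * d b.1.1 := by
                have hne : ¬ d b.1.1 < d (IncAux.oth b) := by rw [h2]; omega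
                simp only [hrk, if_neg hne, add_zero]
              have hlt : key a < key b := hkeymono a b (by omega)
              rcases hbc with h | h
              · have hbr : b.1.1 = r := by rw [h, ← hrdef]
                rw [hbr, hdr] at hc
                omega
              · omega
        have hsub : (Finset.univ.filter fun b =>
              (incGraph T).Adj a b ∧ (b ∈ P ∨ key b < key a)) ⊆
            (((Finset.univ.filter fun b : Inc T => b.1.1 = a.1.1).erase a) ∪ {pInc})
              ∪ P.erase c1 := by
          intro b hb
          rw [Finset.mem_filter] at hb
          obtain ⟨-, hab, hor⟩ := hb
          rcases hor with hbP | hkey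
          · by_cases hbc1 : b = c1
            · exact Finset.mem_union_left _ (hclass b hab (Or.inl hbc1))
            · exact Finset.mem_union_right _ (Finset.mem_erase.mpr ⟨hbc1, hbP⟩)
          · exact Finset.mem_union_left _ (hclass b hab (Or.inr hkey))
        have h1 := Finset.card_le_card hsub
        have h2 := Finset.card_union_le
          (((Finset.univ.filter fun b : Inc T => b.1.1 = a.1.1).erase a) ∪ {pInc})
          (P.erase c1)
        have h2b := Finset.card_union_le
          ((Finset.univ.filter fun b : Inc T => b.1.1 = a.1.1).erase a) ({pInc} : Finset (Inc T))
        have h3 := cardAt a.1.1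
        have hamem : a ∈ (Finset.univ.filter fun b : Inc T => b.1.1 = a.1.1) :=
          Finset.mem_filter.mpr ⟨Finset.mem_univ _, rfl⟩
        have h4 := Finset.card_erase_of_mem hamem
        have h5 : 1 ≤ (Finset.univ.filter fun b : Inc T => b.1.1 = a.1.1).card :=
          Finset.card_pos.mpr ⟨a, hamem⟩
        have h6 : ({pInc} : Finset (Inc T)).card = 1 := Finset.card_singleton _
        have h7 : (P.erase c1).card = k - 1 := by rw [Finset.card_erase_of_mem hc1P, hPcard]
        omega
  have main : ∀ n : ℕ, ∃ σ : Inc T → ℕ,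
      (∀ a : Inc T, (a ∈ P ∨ key a < n) → σ a ∈ L a) ∧
      (∀ a b : Inc T, (incGraph T).Adj a b → (a ∈ P ∨ key a < n) → (b ∈ P ∨ key b < n) →
        σ a ≠ σ b) ∧
      (∀ i, σ (I i) = α i) := by
    intro n
    induction n with
    | zero =>
      refine ⟨fun a => if h : ∃ i, I i = a then α h.choose else 0, ?_, ?_, ?_⟩
      · rintro a (ha | ha)
        · obtain ⟨i, hi⟩ := hmemP a ha
          simp only
          rw [dif_pos ⟨i, hi⟩]
          have hch := (⟨i, hi⟩ : ∃ j, I j = a).choose_spec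
          have hm := hmem (⟨i, hi⟩ : ∃ j, I j = a).choose
          rwa [hch] at hm
        · omega
      · rintro a b hab (ha | ha) (hb | hb)
        · obtain ⟨i, hi⟩ := hmemP a ha
          obtain ⟨j, hj⟩ := hmemP b hb
          have hcha := (⟨i, hi⟩ : ∃ j, I j = a).choose_spec
          have hchb := (⟨j, hj⟩ : ∃ i, I i = b).choose_spec
          simp only
          rw [dif_pos ⟨i, hi⟩, dif_pos ⟨j, hj⟩]
          apply hdist
          rw [hcha, hchb]
          exact hab
        all_goals omega
      · intro i
        simp only
        rw [dif_pos ⟨i, rfl⟩]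
        have hch := (⟨i, rfl⟩ : ∃ j, I j = I i).choose_spec
        rw [hinj hch]
    | succ n ih =>
      obtain ⟨σ, hσ1, hσ2, hσ3⟩ := ih
      by_cases hex : ∃ a₀ : Inc T, key a₀ = n ∧ a₀ ∉ P
      · obtain ⟨a₀, hk0, hP0⟩ := hex
        set B : Finset (Inc T) :=
          Finset.univ.filter (fun b => (incGraph T).Adj a₀ b ∧ (b ∈ P ∨ key b < key a₀)) with hB
        have hcard : B.card + 1 ≤ maxDeg T + k := by rw [hB]; exact count a₀ hP0
        have hex2 : ∃ c, c ∈ L a₀ ∧ c ∉ B.image σ := by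
          by_contra hcon
          push_neg at hcon
          have h1 : (L a₀).card ≤ (B.image σ).card :=
            Finset.card_le_card (fun c hc => hcon c hc)
          have h2 : (B.image σ).card ≤ B.card := Finset.card_image_le
          have h3 := hL a₀
          omega
        obtain ⟨c, hcL, hcB⟩ := hex2
        have hdown : ∀ a : Inc T, a ≠ a₀ → (a ∈ P ∨ key a < n + 1) → (a ∈ P ∨ key a < n) := by
          rintro a hne (ha | ha)
          · exact Or.inl ha
          · refine Or.inr ?_
            rcases Nat.lt_succ_iff_lt_or_eq.mp ha with h | h
            · exact h
            · exact absurd (hkeyinj a a₀ (h.trans hk0.symm)) hne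
        have hmemB : ∀ b : Inc T, b ≠ a₀ → (incGraph T).Adj a₀ b → (b ∈ P ∨ key b < n + 1) →
            b ∈ B := by
          intro b hbne hadj hbact
          rw [hB, Finset.mem_filter]
          refine ⟨Finset.mem_univ _, hadj, ?_⟩
          rcases hdown b hbne hbact with h | h
          · exact Or.inl h
          · exact Or.inr (by omega)
        refine ⟨Function.update σ a₀ c, ?_, ?_, ?_⟩
        · intro a ha
          by_cases hae : a = a₀
          · subst hae; rw [Function.update_self]; exact hcL
          · rw [Function.update_of_ne hae]; exact hσ1 a (hdown a hae ha)
        · intro a b hab haact hbact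
          by_cases hae : a = a₀ <;> by_cases hbe : b = a₀
          · subst hae; subst hbe; exact absurd rfl hab.1
          · subst hae
            rw [Function.update_self, Function.update_of_ne hbe]
            intro heq
            exact hcB (heq ▸ Finset.mem_image_of_mem σ (hmemB b hbe hab hbact))
          · subst hbe
            rw [Function.update_self, Function.update_of_ne hae]
            intro heq
            exact hcB (heq ▸ Finset.mem_image_of_mem σ
              (hmemB a hae hab.symm haact))
          · rw [Function.update_of_ne hae, Function.update_of_ne hbe]
            exact hσ2 a b hab (hdown a hae haact) (hdown b hbe hbact)
        · intro i
          have hne : I i ≠ a₀ := fun h => hP0 (h ▸ Finset.mem_image_of_mem I (Finset.mem_univ i))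
          rw [Function.update_of_ne hne]
          exact hσ3 i
      · push_neg at hex
        have hdown : ∀ a : Inc T, (a ∈ P ∨ key a < n + 1) → (a ∈ P ∨ key a < n) := by
          rintro a (ha | ha)
          · exact Or.inl ha
          · rcases Nat.lt_succ_iff_lt_or_eq.mp ha with h | h
            · exact Or.inr h
            · exact Or.inl (hex a h)
        exact ⟨σ, fun a ha => hσ1 a (hdown a ha),
          fun a b hab ha hb => hσ2 a b hab (hdown a ha) (hdown b hb), hσ3⟩
  obtain ⟨σ, h1, h2, h3⟩ := main ((Finset.univ.sup key) + 1)
  have hact : ∀ a : Inc T, key a < (Finset.univ.sup key) + 1 :=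
    fun a => Nat.lt_succ_of_le (Finset.le_sup (Finset.mem_univ a))
  exact ⟨σ, fun a => h1 a (Or.inr (hact a)),
    fun a b hab => h2 a b hab (Or.inr (hact a)) (Or.inr (hact b)), h3⟩
end
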